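/- For every natural number n, the number of n-element subsets of Fin 4 × Fin 13 containing a full house equals the sum, over all functions t : Fin 13 → ℕ satisfying t(i) ≤ 4 for every i, ∑ i, t(i) = n, and such that there exist distinct ranks i and j with t(i) ≥ 3 and t(j) ≥ 2, of the product ∏ i, (4 choose t(i)). -/

import Mathlib

attribute [local instance] Classical.propDecidable

/-- A hand contains a flush if some suit appears on at least 5 of its cards. -/
def HasFlush (H : Finset (Fin 4 × Fin 13)) : Prop :=
  ∃ s : Fin 4, 5 ≤ (H.filter (fun c => c.1 = s)).card

/-- A hand contains a full house if some rank appears on ≥3 cards and a different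
rank appears on ≥2 cards. -/
def HasFullHouse (H : Finset (Fin 4 × Fin 13)) : Prop :=
  ∃ r s : Fin 13, r ≠ s ∧ 3 ≤ (H.filter (fun c => c.2 = r)).card ∧
    2 ≤ (H.filter (fun c => c.2 = s)).card

/-- A set of ranks contains a run iffive consecutive ranks
starting at some i ≤ 9 all belong to it. -/
def HasRun (R : Finset (Fin 13)) : Prop :=
  ∃ i : ℕ, i ≤ 9 ∧ ∀ j : ℕ, j ≤ 4 →
    (⟨(i + j) % 13, Nat.mod_lt _ (by norm_num)⟩ : Fin 13) ∈ R

/-- A hand contains a straight if its set of ranks contains a run. -/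
def HasStraight (H : Finset (Fin 4 × Fin 13)) : Prop :=
  HasRun (H.image Prod.snd)

/-- Number of n-card hands containing a flush. -/
noncomputable def flushCount (n : ℕ) : ℕ :=
  ((Finset.univ.powersetCard n : Finset (Finset (Fin 4 × Fin 13))).filter HasFlush).card

/-- Number of n-card hands containing a full house. -/
noncomputable def fullHouseCount (n : ℕ) : ℕ :=
  ((Finset.univ.powersetCard n : Finset (Finset (Fin 4 × Fin 13))).filter HasFullHouse).card

/-- Number of n-card hands containing a straight. -/
noncomputable def straightCount (n : ℕ) : ℕ :=
  ((Finset.univ.powersetCard n : Finset (Finset (Fin 4 × Fin 13))).filter HasStraight).card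


private lemma fiber_card (H : Finset (Fin 4 × Fin 13)) (i : Fin 13)
    [D : DecidablePred (fun c : Fin 4 × Fin 13 => c.2 = i)] :
    ((H.filter (fun c => c.2 = i)).image Prod.fst).card
      = (H.filter (fun c => c.2 = i)).card :=
  Finset.card_image_of_injOn (by
    intro a ha b hb hab
    simp only [Finset.mem_coe, Finset.mem_filter] at ha hb
    exact Prod.ext hab (ha.2.trans hb.2.symm))

private lemma bwd_fiber (f : Fin 13 → Finset (Fin 4)) (i : Fin 13)
    [D1 : DecidablePred (fun c : Fin 4 × Fin 13 => c.1 ∈ f c.2)]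
    [D2 : DecidablePred (fun c : Fin 4 × Fin 13 => c.2 = i)] :
    (((Finset.univ : Finset (Fin 4 × Fin 13)).filter (fun c => c.1 ∈ f c.2)).filter
        (fun c => c.2 = i)).image Prod.fst = f i := by
  ext s
  simp only [Finset.mem_image, Finset.mem_filter, Finset.mem_univ, true_and]
  constructor
  · rintro ⟨c, ⟨hc, hci⟩, rfl⟩
    rwa [hci] at hc
  · intro hs
    exact ⟨(s, i), ⟨hs, rfl⟩, rfl⟩

set_option maxHeartbeats 1000000 in
theorem fullhouse_count_formula (n : ℕ) :
    fullHouseCount n =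
      ∑ t ∈ (Fintype.piFinset (fun _ : Fin 13 => Finset.range 5)).filter
          (fun t => ∑ i, t i = n ∧ ∃ i j : Fin 13, i ≠ j ∧ 3 ≤ t i ∧ 2 ≤ t j),
        ∏ i, Nat.choose 4 (t i) := by
  have hprod : ∀ t : Fin 13 → ℕ,
      (∏ i, Nat.choose 4 (t i))
        = (Fintype.piFinset (fun i : Fin 13 => (Finset.univ : Finset (Fin 4)).powersetCard (t i))).card := by
    intro t
    rw [Fintype.card_piFinset]
    refine Finset.prod_congr rfl fun i _ => ?_
    rw [Finset.card_powersetCard, Finset.card_univ, Fintype.card_fin]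
  rw [Finset.sum_congr rfl (fun t _ => hprod t), ← Finset.card_sigma]
  unfold fullHouseCount
  refine Finset.card_nbij'
    (fun H => ⟨fun i => (H.filter (fun c => c.2 = i)).card,
               fun i => (H.filter (fun c => c.2 = i)).image Prod.fst⟩)
    (fun p => Finset.univ.filter (fun c => c.1 ∈ p.2 c.2))
    ?_ ?_ ?_ ?_
  · -- maps forward
    intro H hH
    rw [Finset.mem_coe, Finset.mem_filter, Finset.mem_powersetCard_univ] at hH
    obtain ⟨hcard, r, s, hrs, h3, h2⟩ := hH
    have hsum : ∑ i, (H.filter (fun c => c.2 = i)).card = n := by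
      rw [← hcard]
      exact (Finset.card_eq_sum_card_fiberwise (f := Prod.snd)
        (fun c _ => Finset.mem_univ c.2)).symm
    rw [Finset.mem_coe, Finset.mem_sigma]
    beta_reduce
    constructor
    · rw [Finset.mem_filter]
      refine ⟨?_, hsum, r, s, hrs, h3, h2⟩
      rw [Fintype.mem_piFinset]
      intro i
      show (Finset.filter (fun c => c.2 = i) H).card ∈ Finset.range 5
      rw [Finset.mem_range, Nat.lt_succ_iff, ← fiber_card]
      calc ((H.filter (fun c => c.2 = i)).image Prod.fst).card
          ≤ Fintype.card (Fin 4) := Finset.card_le_univ _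
        _ = 4 := Fintype.card_fin 4
    · rw [Fintype.mem_piFinset]
      intro i
      show (H.filter (fun c => c.2 = i)).image Prod.fst
        ∈ Finset.powersetCard ((H.filter (fun c => c.2 = i)).card) Finset.univ
      rw [Finset.mem_powersetCard_univ]
      exact fiber_card H i
  · -- maps backward
    rintro ⟨t, f⟩ hp
    show Finset.univ.filter (fun c => c.1 ∈ f c.2)
      ∈ Finset.filter HasFullHouse (Finset.powersetCard n Finset.univ)
    rw [Finset.mem_coe, Finset.mem_sigma, Finset.mem_filter] at hp
    obtain ⟨⟨-, hsum, r, s, hrs, h3, h2⟩, hf⟩ := hp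
    rw [Fintype.mem_piFinset] at hf
    have hcard : ∀ i, (((Finset.univ : Finset (Fin 4 × Fin 13)).filter
        (fun c => c.1 ∈ f c.2)).filter (fun c => c.2 = i)).card = t i := by
      intro i
      rw [← fiber_card, bwd_fiber]
      exact Finset.mem_powersetCard_univ.1 (hf i)
    rw [Finset.mem_filter, Finset.mem_powersetCard_univ]
    refine ⟨?_, r, s, hrs, ?_, ?_⟩
    · rw [Finset.card_eq_sum_card_fiberwise (f := Prod.snd)
        (fun c _ => Finset.mem_univ c.2)]
      simp only [hcard]
      exact hsum
    · rw [hcard]; exact h3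
    · rw [hcard]; exact h2
  · -- left inverse
    intro H hH
    show (Finset.univ.filter (fun c => c.1 ∈ ((H.filter (fun d => d.2 = c.2)).image Prod.fst))) = H
    ext c
    simp only [Finset.mem_filter, Finset.mem_univ, true_and, Finset.mem_image]
    constructor
    · rintro ⟨d, ⟨hd, hd2⟩, hd1⟩
      have : d = c := Prod.ext hd1 hd2
      rwa [← this]
    · intro hc
      exact ⟨c, ⟨hc, rfl⟩, rfl⟩
  · -- right inverse
    rintro ⟨t, f⟩ hp
    rw [Finset.mem_coe, Finset.mem_sigma, Finset.mem_filter] at hp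
    obtain ⟨-, hf⟩ := hp
    rw [Fintype.mem_piFinset] at hf
    have hc : ∀ i, (((Finset.univ : Finset (Fin 4 × Fin 13)).filter
        (fun c => c.1 ∈ f c.2)).filter (fun c => c.2 = i)).card = t i := by
      intro i
      rw [← fiber_card, bwd_fiber]
      exact Finset.mem_powersetCard_univ.1 (hf i)
    show (⟨fun i => ((Finset.univ.filter (fun c : Fin 4 × Fin 13 => c.1 ∈ f c.2)).filter (fun c => c.2 = i)).card,
           fun i => (((Finset.univ.filter (fun c : Fin 4 × Fin 13 => c.1 ∈ f c.2)).filter (fun c => c.2 = i)).image Prod.fst)⟩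
        : Σ _ : Fin 13 → ℕ, Fin 13 → Finset (Fin 4)) = ⟨t, f⟩
    refine Sigma.ext (funext hc) ?_
    simp only [heq_eq_eq]
    exact funext (fun i => bwd_fiber f i)
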